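/- Let (Ā, B̄) be an interconnected structural system with subsystems (Ā_1, B̄_1), …, (Ā_r, B̄_r) and interconnection patterns Ē_{i,j}. Every non-top linked SCC of the overall system digraph D(Ā, B̄) contains at least one non-top linked SCC of some subsystem digraph D(Ā_i, B̄_i). Consequently, if for each i every non-top linked SCC of D(Ā_i, B̄_i) consists of input vertices, then every non-top linked SCC of D(Ā, B̄) contains an input vertex. -/

import Mathlib

open Matrix

/-- Controllability matrix `[B, AB, …, A^{n-1}B]` (columns indexed by `Fin (card X) × U`). -/
def ctrbMatrix {X U : Type*} [Fintype X] [DecidableEq X]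
    (A : Matrix X X ℝ) (B : Matrix X U ℝ) :
    Matrix X (Fin (Fintype.card X) × U) ℝ :=
  fun i kj => (A ^ (kj.1 : ℕ) * B) i kj.2

/-- A real pair `(A,B)` is controllable if its controllability matrix has full rank. -/
def Controllable {X U : Type*} [Fintype X] [DecidableEq X] [Fintype U]
    (A : Matrix X X ℝ) (B : Matrix X U ℝ) : Prop :=
  (ctrbMatrix A B).rank = Fintype.card X

/-- `M` has the same sparsity pattern as the Boolean matrix `Mb`. -/
def SameSparsity {X Y : Type*} (M : Matrix X Y ℝ) (Mb : Matrix X Y Bool) : Prop :=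
  ∀ i j, M i j = 0 ↔ Mb i j = false

/-- Structural controllability of a structural (Boolean) pair. -/
def StructurallyControllable {X U : Type*} [Fintype X] [DecidableEq X] [Fintype U]
    (Ab : Matrix X X Bool) (Bb : Matrix X U Bool) : Prop :=
  ∃ A : Matrix X X ℝ, ∃ B : Matrix X U ℝ,
    SameSparsity A Ab ∧ SameSparsity B Bb ∧ Controllable A B

/-- Edge relation of the system digraph `D(Ā,B̄)`. -/
def sysDigraphRel {X U : Type*} (Ab : Matrix X X Bool) (Bb : Matrix X U Bool) :
    (X ⊕ U) → (X ⊕ U) → Prop :=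
  fun v w => match v, w with
  | Sum.inl j, Sum.inl i => Ab i j = true
  | Sum.inr k, Sum.inl i => Bb i k = true
  | _, Sum.inr _ => False

/-- A state vertex is input-reachable if some input vertex has a directed path to it. -/
def InputReachable {X U : Type*} (Ab : Matrix X X Bool) (Bb : Matrix X U Bool) (x : X) : Prop :=
  ∃ u : U, Relation.ReflTransGen (sysDigraphRel Ab Bb) (Sum.inr u) (Sum.inl x)

/-- Edge relation of the system bipartite graph `B(Ā,B̄)` (left = states ⊕ inputs, right = states). -/
def sysBipEdge {X U : Type*} (Ab : Matrix X X Bool) (Bb : Matrix X U Bool) :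
    (X ⊕ U) → X → Prop :=
  fun v i => match v with
  | Sum.inl j => Ab i j = true
  | Sum.inr k => Bb i k = true

/-- Edge relation of the state bipartite graph `B(Ā)`. -/
def stateBipEdge {X : Type*} (Ab : Matrix X X Bool) : X → X → Prop :=
  fun j i => Ab i j = true

/-- A matching of a bipartite graph with edge relation `E`: a set of edges sharing no
left vertex and no right vertex. -/
def IsMatching {α β : Type*} (E : α → β → Prop) (M : Set (α × β)) : Prop :=
  (∀ e ∈ M, E e.1 e.2) ∧
  (∀ e ∈ M, ∀ f ∈ M, e.1 = f.1 → e = f) ∧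
  (∀ e ∈ M, ∀ f ∈ M, e.2 = f.2 → e = f)

/-- Right vertices belonging to no edge of `M`. -/
def rightUnmatched {α β : Type*} (M : Set (α × β)) : Set β :=
  {b | ∀ e ∈ M, e.2 ≠ b}

/-- Left vertices belonging to no edge of `M`. -/
def leftUnmatched {α β : Type*} (M : Set (α × β)) : Set α :=
  {a | ∀ e ∈ M, e.1 ≠ a}

/-- A maximum matching: a matching of the largest cardinality. -/
def IsMaxMatching {α β : Type*} (E : α → β → Prop) (M : Set (α × β)) : Prop :=
  IsMatching E M ∧ ∀ M' : Set (α × β), IsMatching E M' → M'.ncard ≤ M.ncard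

/-- `S` is a strongly connected component of the digraph with edge relation `R`. -/
def IsSCC {V : Type*} (R : V → V → Prop) (S : Set V) : Prop :=
  S.Nonempty ∧ (∀ u ∈ S, ∀ v ∈ S, Relation.ReflTransGen R u v) ∧
  ∀ w : V, (∀ u ∈ S, Relation.ReflTransGen R u w ∧ Relation.ReflTransGen R w u) → w ∈ S

/-- An SCC is non-top linked if it has no incoming edge from outside. -/
def NonTopLinked {V : Type*} (R : V → V → Prop) (S : Set V) : Prop :=
  ∀ u v : V, R u v → v ∈ S → u ∈ S

/-- Dynamics pattern `(I_r ⊗ Ā') ∨ (Ē ⊗ H̄)` of a system of `r` similar subsystems. -/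
def simA {n : ℕ} (r : ℕ) (A' H : Matrix (Fin n) (Fin n) Bool)
    (E : Matrix (Fin r) (Fin r) Bool) :
    Matrix (Fin r × Fin n) (Fin r × Fin n) Bool :=
  fun q q' => ((if q.1 = q'.1 then A' q.2 q'.2 else false) || (E q.1 q'.1 && H q.2 q'.2))

/-- Input pattern `I_r ⊗ B̄'` of a system of `r` similar subsystems. -/
def simB {n p : ℕ} (r : ℕ) (B' : Matrix (Fin n) (Fin p) Bool) :
    Matrix (Fin r × Fin n) (Fin r × Fin p) Bool :=
  fun q k => if q.1 = k.1 then B' q.2 k.2 else false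

/-- Entrywise OR of Boolean matrices. -/
def orMat {X Y : Type*} (M N : Matrix X Y Bool) : Matrix X Y Bool :=
  fun i j => M i j || N i j

/-- Dynamics pattern of an interconnected system: diagonal blocks `Ā_i`,
off-diagonal blocks `Ē_{i,j}`. -/
def interA {r : ℕ} {n : Fin r → ℕ}
    (A : ∀ i, Matrix (Fin (n i)) (Fin (n i)) Bool)
    (E : ∀ i j, Matrix (Fin (n i)) (Fin (n j)) Bool) :
    Matrix (Σ i, Fin (n i)) (Σ i, Fin (n i)) Bool :=
  fun q q' => if h : q'.1 = q.1 then A q.1 q.2 (h ▸ q'.2) else E q.1 q'.1 q.2 q'.2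

/-- Input pattern of an interconnected system: block diagonal with blocks `B̄_i`. -/
def interB {r : ℕ} {n p : Fin r → ℕ}
    (B : ∀ i, Matrix (Fin (n i)) (Fin (p i)) Bool) :
    Matrix (Σ i, Fin (n i)) (Σ i, Fin (p i)) Bool :=
  fun q k => if h : k.1 = q.1 then B q.1 q.2 (h ▸ k.2) else false

/-- Edges of a subsystem digraph map to edges of the interconnected system digraph. -/
lemma sub_edge_map {r : ℕ} {n p : Fin r → ℕ}
    (A : ∀ i, Matrix (Fin (n i)) (Fin (n i)) Bool)
    (B : ∀ i, Matrix (Fin (n i)) (Fin (p i)) Bool)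
    (E : ∀ i j, Matrix (Fin (n i)) (Fin (n j)) Bool) (i : Fin r)
    {a b : Fin (n i) ⊕ Fin (p i)} (h : sysDigraphRel (A i) (B i) a b) :
    sysDigraphRel (interA A E) (interB B)
      (Sum.map (Sigma.mk i) (Sigma.mk i) a) (Sum.map (Sigma.mk i) (Sigma.mk i) b) := by
  cases a <;> cases b <;>
    simp_all [sysDigraphRel, interA, interB, Sum.map]

/-- Non-top linked sets are closed under taking ancestors along paths. -/
lemma ntl_closed_back {V : Type*} {R : V → V → Prop} {S : Set V}
    (hS : NonTopLinked R S) {u w : V} (h : Relation.ReflTransGen R u w) (hw : w ∈ S) :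
    u ∈ S := by
  induction h using Relation.ReflTransGen.head_induction_on with
  | refl => exact hw
  | head hab _ ih => exact hS _ _ hab ih

/-- Every vertex of a finite digraph is reachable from a non-top linked SCC. -/
lemma exists_ntl_scc {V : Type*} [Finite V] (R : V → V → Prop) (v : V) :
    ∃ T : Set V, IsSCC R T ∧ NonTopLinked R T ∧
      ∀ w ∈ T, Relation.ReflTransGen R w v := by
  classical
  set Anc : V → Set V := fun x => {w | Relation.ReflTransGen R w x} with hAnc
  obtain ⟨u, hu, hmin⟩ := Set.exists_min_image (Anc v) (fun x => (Anc x).ncard)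
    (Set.toFinite _) ⟨v, Relation.ReflTransGen.refl⟩
  refine ⟨{w | Relation.ReflTransGen R u w ∧ Relation.ReflTransGen R w u}, ?_, ?_, ?_⟩
  · refine ⟨⟨u, Relation.ReflTransGen.refl, Relation.ReflTransGen.refl⟩, ?_, ?_⟩
    · exact fun a ha b hb => ha.2.trans hb.1
    · intro w hw
      exact hw u ⟨Relation.ReflTransGen.refl, Relation.ReflTransGen.refl⟩
  · intro a b hab hb
    have hau : Relation.ReflTransGen R a u :=
      (Relation.ReflTransGen.single hab).trans hb.2
    have haAnc : a ∈ Anc v := Relation.ReflTransGen.trans hau hu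
    have hsub : Anc a ⊆ Anc u := fun w hw => Relation.ReflTransGen.trans hw hau
    have heq : Anc a = Anc u :=
      Set.eq_of_subset_of_ncard_le hsub (hmin a haAnc) (Set.toFinite _)
    have : u ∈ Anc a := heq ▸ (Relation.ReflTransGen.refl : u ∈ Anc u)
    exact ⟨this, hau⟩
  · exact fun w hw => hw.2.trans hu

/-- First part of Statement 4, as an auxiliary lemma. -/
lemma interconnected_nonTopLinked_SCC_aux
    {r : ℕ} {n p : Fin r → ℕ}
    (A : ∀ i, Matrix (Fin (n i)) (Fin (n i)) Bool)
    (B : ∀ i, Matrix (Fin (n i)) (Fin (p i)) Bool)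
    (E : ∀ i j, Matrix (Fin (n i)) (Fin (n j)) Bool) :
    ∀ S : Set ((Σ i, Fin (n i)) ⊕ (Σ i, Fin (p i))),
      IsSCC (sysDigraphRel (interA A E) (interB B)) S →
      NonTopLinked (sysDigraphRel (interA A E) (interB B)) S →
      ∃ i : Fin r, ∃ T : Set (Fin (n i) ⊕ Fin (p i)),
        IsSCC (sysDigraphRel (A i) (B i)) T ∧
        NonTopLinked (sysDigraphRel (A i) (B i)) T ∧
        (Sum.map (Sigma.mk i) (Sigma.mk i)) '' T ⊆ S := by
  intro S hSCC hNTL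
  obtain ⟨v, hv⟩ := hSCC.1
  obtain ⟨i, v0, hv0⟩ :
      ∃ i : Fin r, ∃ v0 : Fin (n i) ⊕ Fin (p i),
        Sum.map (Sigma.mk i) (Sigma.mk i) v0 = v := by
    cases v with
    | inl x => exact ⟨x.1, Sum.inl x.2, rfl⟩
    | inr u => exact ⟨u.1, Sum.inr u.2, rfl⟩
  obtain ⟨T, hT, hTntl, hreach⟩ := exists_ntl_scc (sysDigraphRel (A i) (B i)) v0
  refine ⟨i, T, hT, hTntl, ?_⟩
  rintro _ ⟨w, hw, rfl⟩
  have hpath : Relation.ReflTransGen (sysDigraphRel (interA A E) (interB B))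
      (Sum.map (Sigma.mk i) (Sigma.mk i) w) (Sum.map (Sigma.mk i) (Sigma.mk i) v0) :=
    Relation.ReflTransGen.lift (Sum.map (Sigma.mk i) (Sigma.mk i)) (fun a b h => sub_edge_map A B E i h) _ _ (hreach w hw)
  exact ntl_closed_back hNTL hpath (hv0 ▸ hv)

/-- every non-top linked SCC of the overall system digraph contains
(the image of) a non-top linked SCC of some subsystem digraph; consequently, if every
non-top linked SCC of every subsystem digraph consists of input vertices, then every
non-top linked SCC of the overall system digraph contains an input vertex. -/
theorem interconnected_nonTopLinked_SCC
    {r : ℕ} {n p : Fin r → ℕ}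
    (A : ∀ i, Matrix (Fin (n i)) (Fin (n i)) Bool)
    (B : ∀ i, Matrix (Fin (n i)) (Fin (p i)) Bool)
    (E : ∀ i j, Matrix (Fin (n i)) (Fin (n j)) Bool) :
    (∀ S : Set ((Σ i, Fin (n i)) ⊕ (Σ i, Fin (p i))),
      IsSCC (sysDigraphRel (interA A E) (interB B)) S →
      NonTopLinked (sysDigraphRel (interA A E) (interB B)) S →
      ∃ i : Fin r, ∃ T : Set (Fin (n i) ⊕ Fin (p i)),
        IsSCC (sysDigraphRel (A i) (B i)) T ∧
        NonTopLinked (sysDigraphRel (A i) (B i)) T ∧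
        (Sum.map (Sigma.mk i) (Sigma.mk i)) '' T ⊆ S) ∧
    ((∀ i : Fin r, ∀ T : Set (Fin (n i) ⊕ Fin (p i)),
        IsSCC (sysDigraphRel (A i) (B i)) T → NonTopLinked (sysDigraphRel (A i) (B i)) T →
        ∀ v ∈ T, ∃ u : Fin (p i), v = Sum.inr u) →
      ∀ S : Set ((Σ i, Fin (n i)) ⊕ (Σ i, Fin (p i))),
        IsSCC (sysDigraphRel (interA A E) (interB B)) S →
        NonTopLinked (sysDigraphRel (interA A E) (interB B)) S →
        ∃ u : Σ i, Fin (p i), Sum.inr u ∈ S) := by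
  constructor
  · exact interconnected_nonTopLinked_SCC_aux A B E
  · intro hyp S hSCC hNTL
    obtain ⟨i, T, hT, hTntl, hsub⟩ :=
      interconnected_nonTopLinked_SCC_aux A B E S hSCC hNTL
    obtain ⟨v, hv⟩ := hT.1
    obtain ⟨u, rfl⟩ := hyp i T hT hTntl v hv
    exact ⟨⟨i, u⟩, hsub ⟨Sum.inr u, hv, rfl⟩⟩
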